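/- Let C(p) = S(Gp) − S(p) + E_p[f] where S is Shannon entropy, G a stochastic map on a finite set X, and f : X → ℝ. If q minimizes C over the probability simplex and q lies in the relative interior of the simplex, then for every distribution p, C(p) = D(p‖q) − D(Gp‖Gq) + C(q). -/

import Mathlib

open Finset Real

def isDist {X : Type*} [Fintype X] (p : X → ℝ) : Prop :=
  (∀ x, 0 ≤ p x) ∧ ∑ x, p x = 1

def isStoch {X : Type*} [Fintype X] (G : X → X → ℝ) : Prop :=
  (∀ y x, 0 ≤ G y x) ∧ ∀ x, ∑ y, G y x = 1

def push {X : Type*} [Fintype X] (G : X → X → ℝ) (p : X → ℝ) : X → ℝ :=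
  fun y => ∑ x, G y x * p x

noncomputable def KL {X : Type*} [Fintype X] (p q : X → ℝ) : ℝ :=
  ∑ x, p x * Real.log (p x / q x)

noncomputable def Ent {X : Type*} [Fintype X] (p : X → ℝ) : ℝ :=
  -∑ x, p x * Real.log (p x)

noncomputable def cost {X : Type*} [Fintype X] (G : X → X → ℝ) (f : X → ℝ) (p : X → ℝ) : ℝ :=
  Ent (push G p) - Ent p + ∑ x, p x * f x

lemma hasDerivAt_xlogx (u v : ℝ) (h : 0 < u ∨ v = 0) :
    HasDerivAt (fun t : ℝ => (u + t * v) * Real.log (u + t * v)) (v * (Real.log u + 1)) 0 := by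
  rcases h with hu | hv
  · have h1 : HasDerivAt (fun t : ℝ => u + t * v) v 0 := by
      simpa using ((hasDerivAt_id (0:ℝ)).mul_const v).const_add u
    have h2 : HasDerivAt (fun x : ℝ => x * Real.log x) (Real.log u + 1) (u + 0 * v) := by
      simpa using Real.hasDerivAt_mul_log (by simpa using hu.ne')
    simpa [mul_comm, Function.comp_def] using (h2.comp 0 h1)
  · simpa [hv] using (hasDerivAt_const (0:ℝ) (u * Real.log u))

/-- exact mismatch-cost decomposition when the prior `q` is an
interior minimizer of the cost over the simplex. -/
theorem mismatch_cost_decomposition_interior {X : Type*} [Fintype X]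
    (G : X → X → ℝ) (f : X → ℝ) (q : X → ℝ)
    (hG : isStoch G) (hq : isDist q)
    (hmin : ∀ r, isDist r → cost G f q ≤ cost G f r)
    (hqpos : ∀ x, 0 < q x) :
    ∀ p, isDist p →
      cost G f p = KL p q - KL (push G p) (push G q) + cost G f q := by
  classical
  haveI hne : Nonempty X := by
    by_contra h
    rw [not_nonempty_iff] at h
    have := hq.2
    simp [Finset.univ_eq_empty] at this
  set Pq : X → ℝ := push G q with hPqdef
  have hPqnn : ∀ y, 0 ≤ Pq y := fun y =>
    Finset.sum_nonneg fun x _ => mul_nonneg (hG.1 y x) (hqpos x).le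
  have hPq0 : ∀ y, Pq y = 0 → ∀ x, G y x = 0 := by
    intro y hy x
    by_contra hGx
    have hpos : 0 < G y x * q x := mul_pos ((hG.1 y x).lt_of_ne (Ne.symm hGx)) (hqpos x)
    have : 0 < Pq y :=
      Finset.sum_pos' (fun i _ => mul_nonneg (hG.1 y i) (hqpos i).le) ⟨x, Finset.mem_univ x, hpos⟩
    linarith
  set φ : X → ℝ := fun x => f x + Real.log (q x) - ∑ y, G y x * Real.log (Pq y) with hφdef
  -- step 1 : φ is constant
  have key : ∀ a b : X, φ a = φ b := by
    intro a b
    set c : X → ℝ := fun x => (if x = a then (1:ℝ) else 0) - (if x = b then 1 else 0) with hc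
    set d : X → ℝ := fun y => G y a - G y b with hd
    have hsumc : ∑ x, c x = 0 := by simp [hc]
    have habs : ∀ x, |c x| ≤ 1 := by
      intro x
      simp only [hc]
      split_ifs <;> norm_num
    have hpushr : ∀ t : ℝ, ∀ y, (∑ x, G y x * (q x + t * c x)) = Pq y + t * d y := by
      intro t y
      have h1 : ∑ x, G y x * c x = d y := by
        simp [hc, hd, mul_sub, Finset.sum_sub_distrib, mul_ite, mul_one, mul_zero]
      calc ∑ x, G y x * (q x + t * c x)
          = ∑ x, (G y x * q x + t * (G y x * c x)) := by
            refine Finset.sum_congr rfl fun x _ => by ring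
        _ = Pq y + t * ∑ x, G y x * c x := by
            rw [Finset.sum_add_distrib, ← Finset.mul_sum]; rfl
        _ = Pq y + t * d y := by rw [h1]
    set g : ℝ → ℝ := fun t =>
      -(∑ y, (Pq y + t * d y) * Real.log (Pq y + t * d y)) +
        (∑ x, (q x + t * c x) * Real.log (q x + t * c x)) + ∑ x, (q x + t * c x) * f x with hg
    have hgt : ∀ t, g t = cost G f (fun x => q x + t * c x) := by
      intro t
      simp only [hg, cost, Ent, push, hpushr]
      ring
    obtain ⟨ε, hε, hεle⟩ : ∃ ε : ℝ, 0 < ε ∧ ∀ x, ε ≤ q x := by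
      refine ⟨Finset.univ.inf' Finset.univ_nonempty q, ?_, ?_⟩
      · obtain ⟨x0, _, hx0⟩ := Finset.exists_mem_eq_inf' Finset.univ_nonempty q
        rw [hx0]; exact hqpos x0
      · intro x; exact Finset.inf'_le q (Finset.mem_univ x)
    have hmin0 : IsLocalMin g 0 := by
      refine Filter.eventually_of_mem (Metric.ball_mem_nhds (0:ℝ) hε) ?_
      intro t ht
      have h2 : |t| < ε := by simpa [Real.dist_eq] using ht
      have hdist : isDist (fun x => q x + t * c x) := by
        constructor
        · intro x
          show 0 ≤ q x + t * c x
          have h1 : |t * c x| ≤ |t| := by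
            rw [abs_mul]
            nlinarith [habs x, abs_nonneg t]
          have h3 : ε ≤ q x := hεle x
          have h4 := neg_abs_le (t * c x)
          linarith
        · rw [Finset.sum_add_distrib, hq.2, ← Finset.mul_sum, hsumc]; ring
      have h0 : (fun x => q x + 0 * c x) = q := by funext x; ring
      rw [hgt, hgt, h0]
      exact hmin _ hdist
    have hD : HasDerivAt g
        (-(∑ y, d y * (Real.log (Pq y) + 1)) + (∑ x, c x * (Real.log (q x) + 1)) +
          ∑ x, c x * f x) 0 := by
      have h1 : HasDerivAt (fun t : ℝ => ∑ y, (Pq y + t * d y) * Real.log (Pq y + t * d y))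
          (∑ y, d y * (Real.log (Pq y) + 1)) 0 := by
        refine HasDerivAt.fun_sum fun y _ => hasDerivAt_xlogx _ _ ?_
        rcases (hPqnn y).lt_or_eq with h | h
        · exact Or.inl h
        · exact Or.inr (by simp [hd, hPq0 y h.symm a, hPq0 y h.symm b])
      have h2 : HasDerivAt (fun t : ℝ => ∑ x, (q x + t * c x) * Real.log (q x + t * c x))
          (∑ x, c x * (Real.log (q x) + 1)) 0 :=
        HasDerivAt.fun_sum fun x _ => hasDerivAt_xlogx _ _ (Or.inl (hqpos x))
      have h3 : HasDerivAt (fun t : ℝ => ∑ x, (q x + t * c x) * f x) (∑ x, c x * f x) 0 := by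
        refine HasDerivAt.fun_sum fun x _ => ?_
        have : HasDerivAt (fun t : ℝ => q x + t * c x) (c x) 0 := by
          simpa using ((hasDerivAt_id (0:ℝ)).mul_const (c x)).const_add (q x)
        simpa using this.mul_const (f x)
      exact (h1.neg.add h2).add h3
    have hzero : (-(∑ y, d y * (Real.log (Pq y) + 1)) + (∑ x, c x * (Real.log (q x) + 1)) +
        ∑ x, c x * f x) = 0 := by
      rw [← hD.deriv]; exact hmin0.deriv_eq_zero
    have hsumd : ∑ y, d y = 0 := by
      simp [hd, Finset.sum_sub_distrib, hG.2 a, hG.2 b]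
    have e1 : ∑ y, d y * (Real.log (Pq y) + 1) =
        (∑ y, G y a * Real.log (Pq y)) - (∑ y, G y b * Real.log (Pq y)) := by
      have : ∑ y, d y * (Real.log (Pq y) + 1) = (∑ y, d y * Real.log (Pq y)) + ∑ y, d y := by
        rw [← Finset.sum_add_distrib]
        refine Finset.sum_congr rfl fun y _ => by ring
      rw [this, hsumd, add_zero]
      simp [hd, sub_mul, Finset.sum_sub_distrib]
    have e2 : ∑ x, c x * (Real.log (q x) + 1) = Real.log (q a) - Real.log (q b) := by
      simp only [hc, sub_mul, ite_mul, one_mul, zero_mul]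
      rw [Finset.sum_sub_distrib]
      simp [Finset.sum_ite_eq']
    have e3 : ∑ x, c x * f x = f a - f b := by
      simp only [hc, sub_mul, ite_mul, one_mul, zero_mul]
      rw [Finset.sum_sub_distrib]
      simp [Finset.sum_ite_eq']
    rw [e1, e2, e3] at hzero
    simp only [hφdef]
    linarith
  -- step 2 : φ x = cost G f q
  have hswapq : ∑ x, q x * ∑ y, G y x * Real.log (Pq y) = ∑ y, Pq y * Real.log (Pq y) := by
    simp_rw [Finset.mul_sum]
    rw [Finset.sum_comm]
    refine Finset.sum_congr rfl fun y _ => ?_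
    rw [show Pq y * Real.log (Pq y) = (∑ x, G y x * q x) * Real.log (Pq y) from rfl,
      Finset.sum_mul]
    refine Finset.sum_congr rfl fun x _ => by ring
  have hsumqφ : ∑ x, q x * φ x = cost G f q := by
    have h1 : ∀ x, q x * φ x =
        q x * f x + q x * Real.log (q x) - q x * ∑ y, G y x * Real.log (Pq y) := fun x => by
      simp only [hφdef]; ring
    rw [Finset.sum_congr rfl fun x _ => h1 x, Finset.sum_sub_distrib, Finset.sum_add_distrib,
      hswapq]
    simp only [cost, Ent, hPqdef]
    ring
  have hφval : ∀ x, φ x = cost G f q := by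
    obtain ⟨x0⟩ := hne
    have h1 : ∑ x, q x * φ x = φ x0 := by
      rw [Finset.sum_congr rfl fun x _ => by rw [key x x0], ← Finset.sum_mul, hq.2, one_mul]
    intro x
    rw [key x x0]
    linarith [hsumqφ, h1]
  -- step 3 : conclusion
  intro p hp
  have hPp0 : ∀ y, Pq y = 0 → push G p y = 0 := by
    intro y hy
    simp [push, fun x => hPq0 y hy x]
  have hKL1 : KL p q = ∑ x, p x * Real.log (p x) - ∑ x, p x * Real.log (q x) := by
    unfold KL
    rw [← Finset.sum_sub_distrib]
    refine Finset.sum_congr rfl fun x _ => ?_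
    rcases (hp.1 x).lt_or_eq with h | h
    · rw [Real.log_div h.ne' (hqpos x).ne']; ring
    · simp [← h]
  have hKL2 : KL (push G p) Pq =
      ∑ y, push G p y * Real.log (push G p y) - ∑ y, push G p y * Real.log (Pq y) := by
    unfold KL
    rw [← Finset.sum_sub_distrib]
    refine Finset.sum_congr rfl fun y _ => ?_
    have hPpnn : 0 ≤ push G p y :=
      Finset.sum_nonneg fun x _ => mul_nonneg (hG.1 y x) (hp.1 x)
    rcases hPpnn.lt_or_eq with h | h
    · have hq0 : Pq y ≠ 0 := fun hy => by
        have := hPp0 y hy; linarith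
      rw [Real.log_div h.ne' hq0]; ring
    · simp [← h]
  have hswapp : ∑ x, p x * ∑ y, G y x * Real.log (Pq y) = ∑ y, push G p y * Real.log (Pq y) := by
    simp_rw [Finset.mul_sum]
    rw [Finset.sum_comm]
    refine Finset.sum_congr rfl fun y _ => ?_
    rw [show push G p y * Real.log (Pq y) = (∑ x, G y x * p x) * Real.log (Pq y) from rfl,
      Finset.sum_mul]
    refine Finset.sum_congr rfl fun x _ => by ring
  have hsumpφ : ∑ x, p x * φ x = cost G f q := by
    rw [Finset.sum_congr rfl fun x _ => by rw [hφval x], ← Finset.sum_mul, hp.2, one_mul]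
  have hexp : ∑ x, p x * φ x =
      ∑ x, p x * f x + ∑ x, p x * Real.log (q x) - ∑ y, push G p y * Real.log (Pq y) := by
    have h1 : ∀ x, p x * φ x =
        p x * f x + p x * Real.log (q x) - p x * ∑ y, G y x * Real.log (Pq y) := fun x => by
      simp only [hφdef]; ring
    rw [Finset.sum_congr rfl fun x _ => h1 x, Finset.sum_sub_distrib, Finset.sum_add_distrib,
      hswapp]
  rw [hexp] at hsumpφ
  rw [hKL1, hKL2]
  simp only [cost, Ent, hPqdef] at hsumpφ ⊢
  linarith
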